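/- Let V be differentiable with dV/dτ = F(τ) + (ρ/(2ν₀))(v_d − V) where |F(τ)| ≤ ρ/2 for all τ, ρ > 0, ν₀ > 0, v_d ∈ [0,1], and V(τ) ∈ [0,1]. Then limsup_{τ→∞} |V(τ) − v_d| ≤ ν₀. -/

import Mathlib

open Filter Real

theorem stmt11 (V F : ℝ → ℝ) (ρ ν₀ vd : ℝ)
    (hρ : 0 < ρ) (hν₀ : 0 < ν₀) (hvd : vd ∈ Set.Icc (0:ℝ) 1)
    (hode : ∀ τ, HasDerivAt V (F τ + (ρ / (2 * ν₀)) * (vd - V τ)) τ)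
    (hF : ∀ τ, |F τ| ≤ ρ / 2)
    (hVbd : ∀ τ, V τ ∈ Set.Icc (0:ℝ) 1) :
    Filter.limsup (fun τ => |V τ - vd|) Filter.atTop ≤ ν₀ := by
  set k : ℝ := ρ / (2 * ν₀) with hk
  have hkpos : 0 < k := div_pos hρ (by linarith)
  have hνk : ν₀ * k = ρ / 2 := by
    field_simp [hk]
    rw [hk]; field_simp
  -- derivative of g τ = exp(kτ)(V τ - vd)
  have hg : ∀ τ, HasDerivAt (fun τ => Real.exp (k * τ) * (V τ - vd))
      (Real.exp (k * τ) * F τ) τ := by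
    intro τ
    have he : HasDerivAt (fun τ => Real.exp (k * τ)) (Real.exp (k * τ) * k) τ := by
      simpa using ((hasDerivAt_id τ).const_mul k).exp
    have hv : HasDerivAt (fun τ => V τ - vd) (F τ + k * (vd - V τ)) τ :=
      (hode τ).sub_const vd
    have := he.mul hv
    refine this.congr_deriv ?_
    ring
  have hexp : ∀ τ, HasDerivAt (fun τ => ν₀ * Real.exp (k * τ))
      ((ρ / 2) * Real.exp (k * τ)) τ := by
    intro τ
    have he : HasDerivAt (fun τ => Real.exp (k * τ)) (Real.exp (k * τ) * k) τ := by
      simpa using ((hasDerivAt_id τ).const_mul k).exp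
    have := he.const_mul ν₀
    refine this.congr_deriv ?_
    rw [← hνk]; ring
  -- u is antitone
  have hu : ∀ τ, HasDerivAt (fun τ => Real.exp (k * τ) * (V τ - vd) - ν₀ * Real.exp (k * τ))
      (Real.exp (k * τ) * F τ - (ρ / 2) * Real.exp (k * τ)) τ :=
    fun τ => (hg τ).sub (hexp τ)
  have huanti : Antitone (fun τ => Real.exp (k * τ) * (V τ - vd) - ν₀ * Real.exp (k * τ)) := by
    apply antitone_of_deriv_nonpos
    · exact fun τ => (hu τ).differentiableAt
    · intro τ
      rw [(hu τ).deriv]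
      have := (abs_le.mp (hF τ)).2
      have hE := Real.exp_pos (k * τ)
      nlinarith
  -- w is monotone
  have hw : ∀ τ, HasDerivAt (fun τ => Real.exp (k * τ) * (V τ - vd) + ν₀ * Real.exp (k * τ))
      (Real.exp (k * τ) * F τ + (ρ / 2) * Real.exp (k * τ)) τ :=
    fun τ => (hg τ).add (hexp τ)
  have hwmono : Monotone (fun τ => Real.exp (k * τ) * (V τ - vd) + ν₀ * Real.exp (k * τ)) := by
    apply monotone_of_deriv_nonneg
    · exact fun τ => (hw τ).differentiableAt
    · intro τ
      rw [(hw τ).deriv]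
      have := (abs_le.mp (hF τ)).1
      have hE := Real.exp_pos (k * τ)
      nlinarith
  -- the key pointwise bound for τ ≥ 0
  have hbound : ∀ τ, 0 ≤ τ → |V τ - vd| ≤ ν₀ + Real.exp (-(k * τ)) := by
    intro τ hτ
    have hE := Real.exp_pos (k * τ)
    have hEinv : Real.exp (-(k * τ)) = (Real.exp (k * τ))⁻¹ := Real.exp_neg _
    have h0 : |V 0 - vd| ≤ 1 := by
      have h1 := hVbd 0
      simp only [Set.mem_Icc] at h1 hvd
      rw [abs_le]; constructor <;> linarith
    have hupper := huanti hτ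
    have hlower := hwmono hτ
    simp only [mul_zero, Real.exp_zero, one_mul] at hupper hlower
    have h0' := abs_le.mp h0
    rw [abs_le]
    constructor
    · -- lower bound: V τ - vd ≥ -(ν₀ + exp(-kτ))
      have : Real.exp (k * τ) * (V τ - vd) ≥ (V 0 - vd + ν₀) - ν₀ * Real.exp (k * τ) := by
        linarith
      have h2 : V 0 - vd + ν₀ ≥ -1 := by linarith
      rw [hEinv]
      rw [ge_iff_le, ← div_le_iff₀' hE] at this
      calc -(ν₀ + (Real.exp (k * τ))⁻¹)
            = (-1 - ν₀ * Real.exp (k * τ)) / Real.exp (k * τ) := by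
            field_simp
            ring
        _ ≤ (V 0 - vd + ν₀ - ν₀ * Real.exp (k * τ)) / Real.exp (k * τ) := by
            gcongr
        _ ≤ V τ - vd := this
    · have : Real.exp (k * τ) * (V τ - vd) ≤ (V 0 - vd - ν₀) + ν₀ * Real.exp (k * τ) := by
        linarith
      have h2 : V 0 - vd - ν₀ ≤ 1 := by linarith
      rw [hEinv]
      rw [← le_div_iff₀' hE] at this
      calc V τ - vd ≤ (V 0 - vd - ν₀ + ν₀ * Real.exp (k * τ)) / Real.exp (k * τ) := this
        _ ≤ (1 + ν₀ * Real.exp (k * τ)) / Real.exp (k * τ) := by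
            gcongr
        _ = ν₀ + (Real.exp (k * τ))⁻¹ := by
            field_simp
            ring
  -- the bound function tends to ν₀
  have htend : Tendsto (fun τ => ν₀ + Real.exp (-(k * τ))) atTop (nhds ν₀) := by
    have h1 : Tendsto (fun τ : ℝ => k * τ) atTop atTop :=
      Tendsto.const_mul_atTop hkpos tendsto_id
    have h2 : Tendsto (fun τ : ℝ => Real.exp (-(k * τ))) atTop (nhds 0) :=
      Real.tendsto_exp_neg_atTop_nhds_zero.comp h1
    simpa using tendsto_const_nhds.add h2
  -- conclude
  refine le_of_forall_pos_le_add fun ε hε => ?_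
  have hev : ∀ᶠ τ in atTop, |V τ - vd| ≤ ν₀ + ε := by
    have h1 : ∀ᶠ τ in atTop, Real.exp (-(k * τ)) ≤ ε := by
      have := htend
      filter_upwards [(Real.tendsto_exp_neg_atTop_nhds_zero.comp
        (Tendsto.const_mul_atTop hkpos tendsto_id)).eventually
        (eventually_le_nhds hε)] with τ hτ using hτ
    filter_upwards [h1, eventually_ge_atTop (0:ℝ)] with τ h1 h2
    exact (hbound τ h2).trans (by linarith)
  exact limsup_le_of_le (Filter.IsBoundedUnder.isCoboundedUnder_le
    ⟨0, Filter.eventually_map.2 (Filter.Eventually.of_forall fun τ => abs_nonneg _)⟩) hev
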